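/- For each k \geq 1, the equivariant vertex weight of the unique length-k T-fixed point Q^k in the one-leg case \mu = ((1),\emptyset,\emptyset) equals w(Q^k) = \prod_{i=0}^{k-1} (i\,s_1 - s_2 - s_3) / \prod_{i=1}^{k} (-i\,s_1) = \binom{(s_2+s_3)/s_1}{k}, and hence \sum_{k\geq 0} w(Q^k) q^k = (1+q)^{(s_2+s_3)/s_1} as a formal power series in q with coefficients in Q(s_1,s_2,s_3). -/
import Mathlib


/-!
STATEMENT 14: for each `k ≥ 1` the equivariant vertex weight of the unique length-`k`
fixed point `Q^k` of the one-leg vertex `((1),∅,∅)` is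
`w(Q^k) = ∏_{i=0}^{k-1}(i s₁ - s₂ - s₃) / ∏_{i=1}^{k}(-i s₁) = binom((s₂+s₃)/s₁, k)`,
hence `∑_{k≥0} w(Q^k) q^k = (1+q)^{(s₂+s₃)/s₁}` as a formal power series, where
`(1+q)^x := ∑_k binom(x,k) q^k` is the binomial series.
-/

noncomputable section

open MvPolynomial

/-- The field `ℚ(s₁,s₂,s₃)` of equivariant parameters. -/
abbrev K := FractionRing (MvPolynomial (Fin 3) ℚ)

/-- The equivariant parameters `s₁,s₂,s₃`. -/
def s (i : Fin 3) : K := algebraMap (MvPolynomial (Fin 3) ℚ) K (X i)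

/-- The generalized binomial coefficient `binom(x,k) = x(x-1)⋯(x-k+1)/k!`. -/
def rchoose (x : K) (k : ℕ) : K :=
  (∏ i ∈ Finset.range k, (x - (i : K))) / (Nat.factorial k : K)

/-- The localization weight `w(Q^k)` of the length-`k` fixed point. -/
def wQ (k : ℕ) : K :=
  (∏ i ∈ Finset.range k, ((i : K) * s 0 - s 1 - s 2)) /
    (∏ i ∈ Finset.range k, (-((i : K) + 1) * s 0))


lemma s0_ne : s 0 ≠ 0 := by
  simp only [s]
  rw [map_ne_zero_iff _ (IsFractionRing.injective (MvPolynomial (Fin 3) ℚ) K)]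
  exact X_ne_zero 0

lemma wQ_eq_rchoose (k : ℕ) : wQ k = rchoose ((s 1 + s 2) / s 0) k := by
  have hs := s0_ne
  unfold wQ rchoose
  rw [show ((Nat.factorial k : ℕ) : K) = ∏ i ∈ Finset.range k, ((i : K) + 1) by
    rw [← Finset.prod_range_add_one_eq_factorial]
    push_cast; exact Finset.prod_congr rfl fun i _ => by ring,
    ← Finset.prod_div_distrib, ← Finset.prod_div_distrib]
  apply Finset.prod_congr rfl
  intro i _
  have h2 : ((i : K) + 1) ≠ 0 := by
    have : (((i+1 : ℕ)) : K) ≠ 0 := Nat.cast_ne_zero.mpr (Nat.succ_ne_zero i)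
    push_cast at this; exact this
  have h1 : (-((i : K) + 1) * s 0) ≠ 0 := mul_ne_zero (neg_ne_zero.mpr h2) hs
  rw [div_eq_div_iff h1 h2]
  field_simp
  ring

theorem one_leg_vertex_weight_is_binomial :
    (∀ k : ℕ, 1 ≤ k → wQ k = rchoose ((s 1 + s 2) / s 0) k) ∧
    PowerSeries.mk wQ = PowerSeries.mk (rchoose ((s 1 + s 2) / s 0)) := by
  exact ⟨fun k _ => wQ_eq_rchoose k, congrArg PowerSeries.mk (funext wQ_eq_rchoose)⟩

end
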